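/- arXiv:2510.02610 — 2 statements merged into one kernel-verified Lean document; each statement's English description precedes it below -/
import Mathlib

section
/- Under the stated setup, the conditional mutual information of X_{k₀} and Y given X_{k₁} equals the mutual information between (X_{k₀}, X_{k₁}) and Y: I(X_{k₀}; Y ∣ X_{k₁}) = ((m-1)/m)·log( m/(m-1) ) + (1/m)·log m, where I(X_{k₀}; Y ∣ X_{k₁}) = ∑_{x₂=1}^{m} P(X_{k₁}=x₂) ∑_{x₁=1}^{m} ∑_{y∈{0,1}} P(X_{k₀}=x₁, Y=y ∣ X_{k₁}=x₂) · log( P(X_{k₀}=x₁, Y=y ∣ X_{k₁}=x₂) / ( P(X_{k₀}=x₁ ∣ X_{k₁}=x₂) · P(Y=y ∣ X_{k₁}=x₂) ) ), with the convention that summands with zero joint conditional probability are 0. -/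
open MeasureTheory ProbabilityTheory
open scoped ENNReal

/-- The conditional mutual information of `X_{k₀}` and `Y` given
`X_{k₁}` equals `((m-1)/m)·log(m/(m-1)) + (1/m)·log m`, where
`I(X_{k₀}; Y ∣ X_{k₁}) = ∑_{x₂} P(X_{k₁}=x₂) ∑_{x₁} ∑_{y∈{0,1}}
P(X_{k₀}=x₁, Y=y ∣ X_{k₁}=x₂) · log(P(X_{k₀}=x₁, Y=y ∣ X_{k₁}=x₂) /
(P(X_{k₀}=x₁ ∣ X_{k₁}=x₂) · P(Y=y ∣ X_{k₁}=x₂)))`, with the convention that summands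
with zero joint conditional probability are `0` (which holds automatically here). -/
theorem stmt_8
    {Ω : Type*} [MeasurableSpace Ω] (μ : Measure Ω) [IsProbabilityMeasure μ]
    (m d : ℕ) (hm : 2 ≤ m) (hd : 2 ≤ d)
    (X : Fin d → Ω → Fin m)
    (hXmeas : ∀ i, Measurable (X i))
    (hXindep : iIndepFun X μ)
    (hXunif : ∀ (i : Fin d) (n : Fin m), μ {ω | X i ω = n} = 1 / m)
    (k₀ k₁ : Fin d) (hk : k₀ < k₁)
    (Y : Ω → ℕ)
    (hY : ∀ ω, Y ω = if X k₀ ω = X k₁ ω then 1 else 0) :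
    ∑ x₂ : Fin m, (μ {ω | X k₁ ω = x₂}).toReal *
        ∑ x₁ : Fin m, ∑ y ∈ ({0, 1} : Finset ℕ),
          (μ[{ω | X k₀ ω = x₁} ∩ {ω | Y ω = y} | {ω | X k₁ ω = x₂}]).toReal *
            Real.log
              ((μ[{ω | X k₀ ω = x₁} ∩ {ω | Y ω = y} | {ω | X k₁ ω = x₂}]).toReal /
                ((μ[{ω | X k₀ ω = x₁} | {ω | X k₁ ω = x₂}]).toReal *
                  (μ[{ω | Y ω = y} | {ω | X k₁ ω = x₂}]).toReal)) =
      ((m : ℝ) - 1) / m * Real.log ((m : ℝ) / ((m : ℝ) - 1))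
        + 1 / m * Real.log m := by
  have hmR : (0:ℝ) < m := by positivity
  have hmR0 : (m:ℝ) ≠ 0 := ne_of_gt hmR
  have hm1R : (1:ℝ) < m := by exact_mod_cast hm.trans_lt' one_lt_two
  have hm1R0 : (m:ℝ) - 1 ≠ 0 := by linarith
  have hm0 : (m:ℝ≥0∞) ≠ 0 := by exact_mod_cast Nat.cast_ne_zero.2 (by omega)
  have hmtop : (m:ℝ≥0∞) ≠ ⊤ := ENNReal.natCast_ne_top m
  -- measurability of level sets
  have hBmeas : ∀ (i : Fin d) (n : Fin m), MeasurableSet {ω | X i ω = n} :=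
    fun i n => hXmeas i (measurableSet_singleton n)
  -- independence of X k₀ and X k₁
  have hind : IndepFun (X k₀) (X k₁) μ := hXindep.indepFun hk.ne
  -- joint probability
  have hjoint : ∀ x₁ x₂ : Fin m,
      μ ({ω | X k₁ ω = x₂} ∩ {ω | X k₀ ω = x₁}) = 1/m * (1/m) := by
    intro x₁ x₂
    have := hind.measure_inter_preimage_eq_mul {x₁} {x₂}
      (measurableSet_singleton x₁) (measurableSet_singleton x₂)
    have h2 : μ ({ω | X k₀ ω = x₁} ∩ {ω | X k₁ ω = x₂})
        = μ {ω | X k₀ ω = x₁} * μ {ω | X k₁ ω = x₂} := this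
    rw [Set.inter_comm, h2, hXunif, hXunif]
  have hjointR : ∀ x₁ x₂ : Fin m,
      (μ ({ω | X k₁ ω = x₂} ∩ {ω | X k₀ ω = x₁})).toReal = 1/(m:ℝ) * (1/(m:ℝ)) := by
    intro x₁ x₂
    rw [hjoint]
    simp [ENNReal.toReal_div, ENNReal.toReal_mul]
  -- Y level sets
  have hY1 : {ω | Y ω = 1} = {ω | X k₀ ω = X k₁ ω} := by
    ext ω; simp only [Set.mem_setOf_eq, hY ω]
    by_cases h : X k₀ ω = X k₁ ω <;> simp [h]
  have hY0 : {ω | Y ω = 0} = {ω | X k₀ ω = X k₁ ω}ᶜ := by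
    ext ω; simp only [Set.mem_setOf_eq, Set.mem_compl_iff, hY ω]
    by_cases h : X k₀ ω = X k₁ ω <;> simp [h]
  -- generic conditional probability formula
  have key : ∀ (x₂ : Fin m) (A : Set Ω),
      (μ[A | {ω | X k₁ ω = x₂}]).toReal
        = m * (μ ({ω | X k₁ ω = x₂} ∩ A)).toReal := by
    intro x₂ A
    rw [cond_apply (hBmeas k₁ x₂) μ A, ENNReal.toReal_mul, hXunif]
    congr 1
    rw [one_div, inv_inv]
    simp
  -- conditional probabilities:
  have hq : ∀ x₁ x₂ : Fin m,
      (μ[{ω | X k₀ ω = x₁} | {ω | X k₁ ω = x₂}]).toReal = 1/(m:ℝ) := by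
    intro x₁ x₂
    rw [key, hjointR]
    field_simp
  have hr1 : ∀ x₂ : Fin m,
      (μ[{ω | Y ω = 1} | {ω | X k₁ ω = x₂}]).toReal = 1/(m:ℝ) := by
    intro x₂
    rw [key]
    have : {ω | X k₁ ω = x₂} ∩ {ω | Y ω = 1} = {ω | X k₁ ω = x₂} ∩ {ω | X k₀ ω = x₂} := by
      rw [hY1]; ext ω
      simp only [Set.mem_inter_iff, Set.mem_setOf_eq]
      constructor
      · rintro ⟨h1, h2⟩; exact ⟨h1, h2.trans h1⟩
      · rintro ⟨h1, h2⟩; exact ⟨h1, h2.trans h1.symm⟩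
    rw [this, hjointR]
    field_simp
  have hr0 : ∀ x₂ : Fin m,
      (μ[{ω | Y ω = 0} | {ω | X k₁ ω = x₂}]).toReal = ((m:ℝ)-1)/(m:ℝ) := by
    intro x₂
    rw [key]
    have hset : {ω | X k₁ ω = x₂} ∩ {ω | Y ω = 0}
        = {ω | X k₁ ω = x₂} \ ({ω | X k₁ ω = x₂} ∩ {ω | Y ω = 1}) := by
      rw [hY0, hY1]
      ext ω
      simp only [Set.mem_inter_iff, Set.mem_setOf_eq, Set.mem_diff, Set.mem_compl_iff]
      tauto
    have hmeas1 : MeasurableSet ({ω | X k₁ ω = x₂} ∩ {ω | Y ω = 1}) := by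
      rw [hY1]
      exact (hBmeas k₁ x₂).inter (measurableSet_eq_fun (hXmeas k₀) (hXmeas k₁))
    have hadd := measure_inter_add_diff (μ := μ) {ω | X k₁ ω = x₂} hmeas1
    have hfin1 : μ ({ω | X k₁ ω = x₂} ∩ ({ω | X k₁ ω = x₂} ∩ {ω | Y ω = 1})) ≠ ⊤ :=
      measure_ne_top μ _
    have hfin2 : μ ({ω | X k₁ ω = x₂} \ ({ω | X k₁ ω = x₂} ∩ {ω | Y ω = 1})) ≠ ⊤ :=
      measure_ne_top μ _
    have hRadd := congrArg ENNReal.toReal hadd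
    rw [ENNReal.toReal_add hfin1 hfin2] at hRadd
    have e1 : {ω | X k₁ ω = x₂} ∩ ({ω | X k₁ ω = x₂} ∩ {ω | Y ω = 1})
        = {ω | X k₁ ω = x₂} ∩ {ω | X k₀ ω = x₂} := by
      rw [hY1]; ext ω
      simp only [Set.mem_inter_iff, Set.mem_setOf_eq]
      constructor
      · rintro ⟨h1, _, h2⟩; exact ⟨h1, h2.trans h1⟩
      · rintro ⟨h1, h2⟩; exact ⟨h1, h1, h2.trans h1.symm⟩
    rw [e1, hjointR, hXunif] at hRadd
    have hBR : ((1/(m:ℝ≥0∞))).toReal = 1/(m:ℝ) := by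
      simp [ENNReal.toReal_div]
    rw [hBR] at hRadd
    rw [hset]
    have : (μ ({ω | X k₁ ω = x₂} \ ({ω | X k₁ ω = x₂} ∩ {ω | Y ω = 1}))).toReal
        = 1/(m:ℝ) - 1/(m:ℝ) * (1/(m:ℝ)) := by linarith
    rw [this]
    field_simp
  have hp1 : ∀ x₁ x₂ : Fin m,
      (μ[{ω | X k₀ ω = x₁} ∩ {ω | Y ω = 1} | {ω | X k₁ ω = x₂}]).toReal
        = if x₁ = x₂ then 1/(m:ℝ) else 0 := by
    intro x₁ x₂
    rw [key]
    by_cases h : x₁ = x₂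
    · subst h
      have : {ω | X k₁ ω = x₁} ∩ ({ω | X k₀ ω = x₁} ∩ {ω | Y ω = 1})
          = {ω | X k₁ ω = x₁} ∩ {ω | X k₀ ω = x₁} := by
        rw [hY1]; ext ω
        simp only [Set.mem_inter_iff, Set.mem_setOf_eq]
        constructor
        · rintro ⟨h1, h2, _⟩; exact ⟨h1, h2⟩
        · rintro ⟨h1, h2⟩; exact ⟨h1, h2, h2.trans h1.symm⟩
      rw [this, hjointR, if_pos rfl]
      field_simp
    · have : {ω | X k₁ ω = x₂} ∩ ({ω | X k₀ ω = x₁} ∩ {ω | Y ω = 1}) = ∅ := by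
        rw [hY1]; ext ω
        simp only [Set.mem_inter_iff, Set.mem_setOf_eq, Set.mem_empty_iff_false, iff_false]
        rintro ⟨h1, h2, h3⟩
        exact h (h2.symm.trans (h3.trans h1))
      rw [this, if_neg h]
      simp
  have hp0 : ∀ x₁ x₂ : Fin m,
      (μ[{ω | X k₀ ω = x₁} ∩ {ω | Y ω = 0} | {ω | X k₁ ω = x₂}]).toReal
        = if x₁ = x₂ then 0 else 1/(m:ℝ) := by
    intro x₁ x₂
    rw [key]
    by_cases h : x₁ = x₂
    · subst h
      have : {ω | X k₁ ω = x₁} ∩ ({ω | X k₀ ω = x₁} ∩ {ω | Y ω = 0}) = ∅ := by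
        rw [hY0]; ext ω
        simp only [Set.mem_inter_iff, Set.mem_setOf_eq, Set.mem_empty_iff_false, iff_false,
          Set.mem_compl_iff]
        rintro ⟨h1, h2, h3⟩
        exact h3 (h2.trans h1.symm)
      rw [this, if_pos rfl]
      simp
    · have : {ω | X k₁ ω = x₂} ∩ ({ω | X k₀ ω = x₁} ∩ {ω | Y ω = 0})
          = {ω | X k₁ ω = x₂} ∩ {ω | X k₀ ω = x₁} := by
        rw [hY0]; ext ω
        simp only [Set.mem_inter_iff, Set.mem_setOf_eq, Set.mem_compl_iff]
        constructor
        · rintro ⟨h1, h2, _⟩; exact ⟨h1, h2⟩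
        · rintro ⟨h1, h2⟩
          exact ⟨h1, h2, fun hc => h ((h2.symm.trans hc).trans h1)⟩
      rw [this, hjointR, if_neg h]
      field_simp
  -- inner sum
  set C : ℝ := ((m : ℝ) - 1) / m * Real.log ((m : ℝ) / ((m : ℝ) - 1))
        + 1 / m * Real.log m with hC
  have inner : ∀ x₂ : Fin m,
      (∑ x₁ : Fin m, ∑ y ∈ ({0, 1} : Finset ℕ),
          (μ[{ω | X k₀ ω = x₁} ∩ {ω | Y ω = y} | {ω | X k₁ ω = x₂}]).toReal *
            Real.log
              ((μ[{ω | X k₀ ω = x₁} ∩ {ω | Y ω = y} | {ω | X k₁ ω = x₂}]).toReal /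
                ((μ[{ω | X k₀ ω = x₁} | {ω | X k₁ ω = x₂}]).toReal *
                  (μ[{ω | Y ω = y} | {ω | X k₁ ω = x₂}]).toReal))) = C := by
    intro x₂
    have hsum : ∀ x₁ : Fin m,
        (∑ y ∈ ({0, 1} : Finset ℕ),
          (μ[{ω | X k₀ ω = x₁} ∩ {ω | Y ω = y} | {ω | X k₁ ω = x₂}]).toReal *
            Real.log
              ((μ[{ω | X k₀ ω = x₁} ∩ {ω | Y ω = y} | {ω | X k₁ ω = x₂}]).toReal /
                ((μ[{ω | X k₀ ω = x₁} | {ω | X k₁ ω = x₂}]).toReal *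
                  (μ[{ω | Y ω = y} | {ω | X k₁ ω = x₂}]).toReal)))
          = if x₁ = x₂ then 1/(m:ℝ) * Real.log m
            else 1/(m:ℝ) * Real.log ((m:ℝ)/((m:ℝ)-1)) := by
      intro x₁
      rw [Finset.sum_pair (by norm_num : (0:ℕ) ≠ 1)]
      rw [hp0, hp1, hq, hr0 x₂, hr1 x₂]
      by_cases h : x₁ = x₂
      · rw [if_pos h, if_pos h, if_pos h]
        have harg : 1/(m:ℝ) / (1/(m:ℝ) * (1/(m:ℝ))) = (m:ℝ) := by
          field_simp
        rw [harg]
        ring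
      · rw [if_neg h, if_neg h, if_neg h]
        have harg : 1/(m:ℝ) / (1/(m:ℝ) * (((m:ℝ)-1)/(m:ℝ))) = (m:ℝ)/((m:ℝ)-1) := by
          field_simp
        rw [harg]
        ring
    rw [Finset.sum_congr rfl (fun x₁ _ => hsum x₁)]
    have : ∀ x₁ : Fin m,
        (if x₁ = x₂ then 1/(m:ℝ) * Real.log m
          else 1/(m:ℝ) * Real.log ((m:ℝ)/((m:ℝ)-1)))
        = 1/(m:ℝ) * Real.log ((m:ℝ)/((m:ℝ)-1))
          + (if x₁ = x₂ then
              1/(m:ℝ) * Real.log m - 1/(m:ℝ) * Real.log ((m:ℝ)/((m:ℝ)-1)) else 0) := by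
      intro x₁
      by_cases h : x₁ = x₂ <;> simp [h]
    rw [Finset.sum_congr rfl (fun x₁ _ => this x₁), Finset.sum_add_distrib,
      Finset.sum_const, Finset.sum_ite_eq' Finset.univ x₂
        (fun _ => 1/(m:ℝ) * Real.log m - 1/(m:ℝ) * Real.log ((m:ℝ)/((m:ℝ)-1)))]
    simp only [Finset.card_univ, Fintype.card_fin, Finset.mem_univ, if_true, nsmul_eq_mul]
    rw [hC]
    field_simp
    ring
  rw [Finset.sum_congr rfl (fun x₂ _ => by rw [inner x₂, hXunif])]
  rw [Finset.sum_const]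
  simp only [Finset.card_univ, Fintype.card_fin, nsmul_eq_mul]
  have : ((1:ℝ≥0∞)/m).toReal = 1/(m:ℝ) := by simp [ENNReal.toReal_div]
  rw [this, hC]
  field_simp
end

section
/- Under the stated setup, the conditional mutual information of X_{k₁} and Y given X_{k₀} equals the conditional mutual information of X_{k₀} and Y given X_{k₁}, and both equal ((m-1)/m)·log( m/(m-1) ) + (1/m)·log m: I(X_{k₁}; Y ∣ X_{k₀}) = I(X_{k₀}; Y ∣ X_{k₁}) = I(X_{k₀}, X_{k₁}; Y). -/
open MeasureTheory ProbabilityTheory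
open scoped ENNReal

lemma stmt9_sum_ite {α : Type*} [Fintype α] [DecidableEq α] (x₀ : α) (a b : ℝ) :
    ∑ x : α, (if x = x₀ then a else b) = a + ((Fintype.card α : ℝ) - 1) * b := by
  have h : ∀ x : α, (if x = x₀ then a else b) = (if x = x₀ then a - b else 0) + b := by
    intro x; split_ifs <;> ring
  rw [Finset.sum_congr rfl (fun x _ => h x), Finset.sum_add_distrib,
    Finset.sum_ite_eq' Finset.univ x₀ (fun _ => a - b), Finset.sum_const, Finset.card_univ,
    nsmul_eq_mul]
  simp only [Finset.mem_univ, if_true]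
  ring

set_option maxHeartbeats 2000000 in
/-- The conditional mutual information of `X_{k₁}` and `Y` given
`X_{k₀}` equals the conditional mutual information of `X_{k₀}` and `Y` given `X_{k₁}`,
and both equal the joint mutual information `I(X_{k₀}, X_{k₁}; Y)`, which equals
`((m-1)/m)·log(m/(m-1)) + (1/m)·log m`. -/
theorem stmt_9
    {Ω : Type*} [MeasurableSpace Ω] (μ : Measure Ω) [IsProbabilityMeasure μ]
    (m d : ℕ) (hm : 2 ≤ m) (hd : 2 ≤ d)
    (X : Fin d → Ω → Fin m)
    (hXmeas : ∀ i, Measurable (X i))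
    (hXindep : iIndepFun X μ)
    (hXunif : ∀ (i : Fin d) (n : Fin m), μ {ω | X i ω = n} = 1 / m)
    (k₀ k₁ : Fin d) (hk : k₀ < k₁)
    (Y : Ω → ℕ)
    (hY : ∀ ω, Y ω = if X k₀ ω = X k₁ ω then 1 else 0) :
    (∑ x₀ : Fin m, (μ {ω | X k₀ ω = x₀}).toReal *
        ∑ x₁ : Fin m, ∑ y ∈ ({0, 1} : Finset ℕ),
          (μ[{ω | X k₁ ω = x₁} ∩ {ω | Y ω = y} | {ω | X k₀ ω = x₀}]).toReal *
            Real.log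
              ((μ[{ω | X k₁ ω = x₁} ∩ {ω | Y ω = y} | {ω | X k₀ ω = x₀}]).toReal /
                ((μ[{ω | X k₁ ω = x₁} | {ω | X k₀ ω = x₀}]).toReal *
                  (μ[{ω | Y ω = y} | {ω | X k₀ ω = x₀}]).toReal))
      = ∑ x₂ : Fin m, (μ {ω | X k₁ ω = x₂}).toReal *
          ∑ x₁ : Fin m, ∑ y ∈ ({0, 1} : Finset ℕ),
            (μ[{ω | X k₀ ω = x₁} ∩ {ω | Y ω = y} | {ω | X k₁ ω = x₂}]).toReal *
              Real.log
                ((μ[{ω | X k₀ ω = x₁} ∩ {ω | Y ω = y} | {ω | X k₁ ω = x₂}]).toReal /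
                  ((μ[{ω | X k₀ ω = x₁} | {ω | X k₁ ω = x₂}]).toReal *
                    (μ[{ω | Y ω = y} | {ω | X k₁ ω = x₂}]).toReal))) ∧
    (∑ x₂ : Fin m, (μ {ω | X k₁ ω = x₂}).toReal *
        ∑ x₁ : Fin m, ∑ y ∈ ({0, 1} : Finset ℕ),
          (μ[{ω | X k₀ ω = x₁} ∩ {ω | Y ω = y} | {ω | X k₁ ω = x₂}]).toReal *
            Real.log
              ((μ[{ω | X k₀ ω = x₁} ∩ {ω | Y ω = y} | {ω | X k₁ ω = x₂}]).toReal /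
                ((μ[{ω | X k₀ ω = x₁} | {ω | X k₁ ω = x₂}]).toReal *
                  (μ[{ω | Y ω = y} | {ω | X k₁ ω = x₂}]).toReal))
      = ∑ x₁ : Fin m, ∑ x₂ : Fin m, ∑ y ∈ ({0, 1} : Finset ℕ),
          (μ ({ω | X k₀ ω = x₁} ∩ {ω | X k₁ ω = x₂} ∩ {ω | Y ω = y})).toReal *
            Real.log
              ((μ ({ω | X k₀ ω = x₁} ∩ {ω | X k₁ ω = x₂} ∩ {ω | Y ω = y})).toReal /
                ((μ ({ω | X k₀ ω = x₁} ∩ {ω | X k₁ ω = x₂})).toReal *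
                  (μ {ω | Y ω = y}).toReal))) ∧
    (∑ x₁ : Fin m, ∑ x₂ : Fin m, ∑ y ∈ ({0, 1} : Finset ℕ),
        (μ ({ω | X k₀ ω = x₁} ∩ {ω | X k₁ ω = x₂} ∩ {ω | Y ω = y})).toReal *
          Real.log
            ((μ ({ω | X k₀ ω = x₁} ∩ {ω | X k₁ ω = x₂} ∩ {ω | Y ω = y})).toReal /
              ((μ ({ω | X k₀ ω = x₁} ∩ {ω | X k₁ ω = x₂})).toReal *
                (μ {ω | Y ω = y}).toReal))
      = ((m : ℝ) - 1) / m * Real.log ((m : ℝ) / ((m : ℝ) - 1)) + 1 / m * Real.log m) := by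
  
  have hm0 : (m : ℝ≥0∞) ≠ 0 := by
    simp; omega
  have hmtop : (m : ℝ≥0∞) ≠ ⊤ := ENNReal.natCast_ne_top m
  have hmA : ∀ (i : Fin d) (x : Fin m), MeasurableSet {ω | X i ω = x} :=
    fun i x => (hXmeas i) (measurableSet_singleton x)
  have hYmeas : Measurable Y := by
    have : Y = fun ω => if X k₀ ω = X k₁ ω then 1 else 0 := funext hY
    rw [this]
    exact Measurable.ite (measurableSet_eq_fun (hXmeas k₀) (hXmeas k₁))
      measurable_const measurable_const
  have hmYs : ∀ y : ℕ, MeasurableSet {ω | Y ω = y} :=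
    fun y => hYmeas (measurableSet_singleton y)
  have hμA : ∀ (i : Fin d) (x : Fin m), μ {ω | X i ω = x} = (m : ℝ≥0∞)⁻¹ := by
    intro i x; rw [hXunif i x, one_div]
  -- pair measure
  have hindep : IndepFun (X k₀) (X k₁) μ := hXindep.indepFun hk.ne
  have hμP : ∀ (x₁ x₂ : Fin m),
      μ ({ω | X k₀ ω = x₁} ∩ {ω | X k₁ ω = x₂}) = (m : ℝ≥0∞)⁻¹ * (m : ℝ≥0∞)⁻¹ := by
    intro x₁ x₂
    have := hindep.measure_inter_preimage_eq_mul {x₁} {x₂}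
      (measurableSet_singleton _) (measurableSet_singleton _)
    have h2 : X k₀ ⁻¹' {x₁} = {ω | X k₀ ω = x₁} := rfl
    have h3 : X k₁ ⁻¹' {x₂} = {ω | X k₁ ω = x₂} := rfl
    rw [h2, h3] at this
    rw [this, hμA, hμA]
  -- triple set
  have hsetT : ∀ (x₁ x₂ : Fin m) (y : ℕ),
      {ω | X k₀ ω = x₁} ∩ {ω | X k₁ ω = x₂} ∩ {ω | Y ω = y}
        = if y = (if x₁ = x₂ then 1 else 0) then {ω | X k₀ ω = x₁} ∩ {ω | X k₁ ω = x₂}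
          else (∅ : Set Ω) := by
    intro x₁ x₂ y
    ext ω
    by_cases h12 : x₁ = x₂ <;> simp only [Set.mem_inter_iff, Set.mem_setOf_eq, hY ω, h12,
      if_true, if_false, Set.mem_empty_iff_false] <;> split_ifs <;> aesop
  have hμT : ∀ (x₁ x₂ : Fin m) (y : ℕ),
      μ ({ω | X k₀ ω = x₁} ∩ {ω | X k₁ ω = x₂} ∩ {ω | Y ω = y})
        = if y = (if x₁ = x₂ then 1 else 0) then (m : ℝ≥0∞)⁻¹ * (m : ℝ≥0∞)⁻¹ else 0 := by
    intro x₁ x₂ y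
    rw [hsetT]
    by_cases h : y = (if x₁ = x₂ then 1 else 0)
    · rw [if_pos h, if_pos h, hμP]
    · rw [if_neg h, if_neg h, measure_empty]
  -- Y = 1 set
  have hsetY1 : {ω | Y ω = 1} = ⋃ x : Fin m, ({ω | X k₀ ω = x} ∩ {ω | X k₁ ω = x}) := by
    ext ω
    simp only [Set.mem_setOf_eq, hY ω, Set.mem_iUnion, Set.mem_inter_iff]
    split_ifs with h
    · simp only [true_iff]
      exact ⟨X k₀ ω, rfl, h.symm⟩
    · refine iff_of_false (by simp) ?_
      rintro ⟨x, h1, h2⟩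
      exact h (h1.trans h2.symm)
  have hμY1 : μ {ω | Y ω = 1} = (m : ℝ≥0∞)⁻¹ := by
    rw [hsetY1, measure_iUnion, tsum_fintype]
    · simp only [hμP]
      rw [Finset.sum_const, Finset.card_univ, Fintype.card_fin, nsmul_eq_mul, ← mul_assoc,
        ENNReal.mul_inv_cancel hm0 hmtop, one_mul]
    · intro i j hij
      refine Set.disjoint_left.2 ?_
      rintro ω ⟨h1, _⟩ ⟨h3, _⟩
      exact hij (h1.symm.trans h3)
    · exact fun x => (hmA k₀ x).inter (hmA k₁ x)
  have hsetY0 : {ω | Y ω = 0} = {ω | Y ω = 1}ᶜ := by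
    ext ω
    simp only [Set.mem_setOf_eq, Set.mem_compl_iff, hY ω]
    split_ifs <;> simp
  have hμY0 : μ {ω | Y ω = 0} = 1 - (m : ℝ≥0∞)⁻¹ := by
    rw [hsetY0, prob_compl_eq_one_sub (hmYs 1), hμY1]
  -- A ∩ {Y = y} computations
  have hsetAY1k0 : ∀ x₀ : Fin m, {ω | X k₀ ω = x₀} ∩ {ω | Y ω = 1}
      = {ω | X k₀ ω = x₀} ∩ {ω | X k₁ ω = x₀} := by
    intro x₀; ext ω
    by_cases hx : X k₀ ω = X k₁ ω <;>
      simp only [Set.mem_inter_iff, Set.mem_setOf_eq, hY ω, hx, if_true, if_false] <;> aesop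
  have hsetAY1k1 : ∀ x₂ : Fin m, {ω | X k₁ ω = x₂} ∩ {ω | Y ω = 1}
      = {ω | X k₀ ω = x₂} ∩ {ω | X k₁ ω = x₂} := by
    intro x₂; ext ω
    by_cases hx : X k₀ ω = X k₁ ω <;>
      simp only [Set.mem_inter_iff, Set.mem_setOf_eq, hY ω, hx, if_true, if_false] <;> aesop
  have hμAY1k0 : ∀ x₀ : Fin m, μ ({ω | X k₀ ω = x₀} ∩ {ω | Y ω = 1})
      = (m : ℝ≥0∞)⁻¹ * (m : ℝ≥0∞)⁻¹ := fun x₀ => by rw [hsetAY1k0, hμP]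
  have hμAY1k1 : ∀ x₂ : Fin m, μ ({ω | X k₁ ω = x₂} ∩ {ω | Y ω = 1})
      = (m : ℝ≥0∞)⁻¹ * (m : ℝ≥0∞)⁻¹ := fun x₂ => by rw [hsetAY1k1, hμP]
  have hμAY0 : ∀ (i : Fin d), (∀ x : Fin m, μ ({ω | X i ω = x} ∩ {ω | Y ω = 1})
        = (m : ℝ≥0∞)⁻¹ * (m : ℝ≥0∞)⁻¹) →
      ∀ x : Fin m, μ ({ω | X i ω = x} ∩ {ω | Y ω = 0})
        = (m : ℝ≥0∞)⁻¹ - (m : ℝ≥0∞)⁻¹ * (m : ℝ≥0∞)⁻¹ := by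
    intro i h1 x
    have hd : {ω | X i ω = x} ∩ {ω | Y ω = 0}
        = {ω | X i ω = x} \ ({ω | X i ω = x} ∩ {ω | Y ω = 1}) := by
      rw [hsetY0]; ext ω
      simp only [Set.mem_inter_iff, Set.mem_setOf_eq, Set.mem_diff, Set.mem_compl_iff]
      tauto
    rw [hd, measure_diff Set.inter_subset_left ((hmA i x).inter (hmYs 1)).nullMeasurableSet
      (measure_ne_top μ _), h1 x, hμA]
  have hμAY0k0 := hμAY0 k₀ hμAY1k0
  have hμAY0k1 := hμAY0 k₁ hμAY1k1
  have hsetc2 : ∀ (x₁ x₂ : Fin m) (y : ℕ),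
      {ω | X k₁ ω = x₂} ∩ ({ω | X k₀ ω = x₁} ∩ {ω | Y ω = y})
        = {ω | X k₀ ω = x₁} ∩ {ω | X k₁ ω = x₂} ∩ {ω | Y ω = y} := by
    intro x₁ x₂ y; ext ω
    simp only [Set.mem_inter_iff, Set.mem_setOf_eq]; tauto
  -- real facts
  have hmR : (m : ℝ) ≠ 0 := Nat.cast_ne_zero.2 (by omega)
  have hm1R : (m : ℝ) - 1 ≠ 0 := by
    have : (2 : ℝ) ≤ (m : ℝ) := by exact_mod_cast hm
    linarith
  -- conditional probabilities (toReal)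
  have hc_pair0 : ∀ x₀ x₁ : Fin m,
      (μ[{ω | X k₁ ω = x₁} | {ω | X k₀ ω = x₀}]).toReal = (m : ℝ)⁻¹ := by
    intro x₀ x₁
    rw [cond_apply (hmA k₀ x₀), hμA, hμP x₀ x₁, inv_inv]
    rw [ENNReal.toReal_mul, ENNReal.toReal_mul, ENNReal.toReal_inv, ENNReal.toReal_natCast]
    field_simp
  have hc_pair1 : ∀ x₂ x₁ : Fin m,
      (μ[{ω | X k₀ ω = x₁} | {ω | X k₁ ω = x₂}]).toReal = (m : ℝ)⁻¹ := by
    intro x₂ x₁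
    rw [cond_apply (hmA k₁ x₂), hμA, Set.inter_comm, hμP x₁ x₂, inv_inv]
    rw [ENNReal.toReal_mul, ENNReal.toReal_mul, ENNReal.toReal_inv, ENNReal.toReal_natCast]
    field_simp
  have hle : (m : ℝ≥0∞)⁻¹ * (m : ℝ≥0∞)⁻¹ ≤ (m : ℝ≥0∞)⁻¹ := by
    calc (m : ℝ≥0∞)⁻¹ * (m : ℝ≥0∞)⁻¹ ≤ (m : ℝ≥0∞)⁻¹ * 1 := by
          gcongr
          exact ENNReal.inv_le_one.2 (by exact_mod_cast Nat.one_le_iff_ne_zero.2 (by omega))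
      _ = (m : ℝ≥0∞)⁻¹ := mul_one _
  have hinvtop : (m : ℝ≥0∞)⁻¹ ≠ ⊤ := ENNReal.inv_ne_top.2 hm0
  have hcY : ∀ (i : Fin d), (∀ x : Fin m, μ ({ω | X i ω = x} ∩ {ω | Y ω = 1})
        = (m : ℝ≥0∞)⁻¹ * (m : ℝ≥0∞)⁻¹) →
      ∀ (x : Fin m) (y : ℕ), y = 0 ∨ y = 1 →
      (μ[{ω | Y ω = y} | {ω | X i ω = x}]).toReal
        = if y = 1 then (m : ℝ)⁻¹ else 1 - (m : ℝ)⁻¹ := by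
    intro i h1 x y hy
    rcases hy with hy | hy <;> subst hy
    · rw [if_neg (by norm_num), cond_apply (hmA i x), hμA, hμAY0 i h1 x, inv_inv,
        ENNReal.toReal_mul, ENNReal.toReal_sub_of_le hle hinvtop, ENNReal.toReal_mul,
        ENNReal.toReal_inv, ENNReal.toReal_natCast]
      field_simp
    · rw [if_pos rfl, cond_apply (hmA i x), hμA, h1 x, inv_inv, ENNReal.toReal_mul,
        ENNReal.toReal_mul, ENNReal.toReal_inv, ENNReal.toReal_natCast]
      field_simp
  have hcY0 := hcY k₀ hμAY1k0
  have hcY1 := hcY k₁ hμAY1k1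
  have he : ∀ a b : Fin m, (if a = b then (1 : ℕ) else 0) = (if b = a then 1 else 0) := by
    intro a b; by_cases h : a = b <;> simp [h, Ne.symm, eq_comm]
  have hc_joint0 : ∀ (x₀ x₁ : Fin m) (y : ℕ),
      (μ[{ω | X k₁ ω = x₁} ∩ {ω | Y ω = y} | {ω | X k₀ ω = x₀}]).toReal
        = if y = (if x₁ = x₀ then 1 else 0) then (m : ℝ)⁻¹ else 0 := by
    intro x₀ x₁ y
    rw [cond_apply (hmA k₀ x₀), hμA, ← Set.inter_assoc, hμT x₀ x₁ y, inv_inv, he x₀ x₁]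
    by_cases h : y = (if x₁ = x₀ then 1 else 0)
    · rw [if_pos h, if_pos h, ENNReal.toReal_mul, ENNReal.toReal_mul, ENNReal.toReal_inv,
        ENNReal.toReal_natCast]
      field_simp
    · rw [if_neg h, if_neg h, mul_zero, ENNReal.toReal_zero]
  have hc_joint1 : ∀ (x₂ x₁ : Fin m) (y : ℕ),
      (μ[{ω | X k₀ ω = x₁} ∩ {ω | Y ω = y} | {ω | X k₁ ω = x₂}]).toReal
        = if y = (if x₁ = x₂ then 1 else 0) then (m : ℝ)⁻¹ else 0 := by
    intro x₂ x₁ y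
    rw [cond_apply (hmA k₁ x₂), hμA, hsetc2, hμT x₁ x₂ y, inv_inv]
    by_cases h : y = (if x₁ = x₂ then 1 else 0)
    · rw [if_pos h, if_pos h, ENNReal.toReal_mul, ENNReal.toReal_mul, ENNReal.toReal_inv,
        ENNReal.toReal_natCast]
      field_simp
    · rw [if_neg h, if_neg h, mul_zero, ENNReal.toReal_zero]
  -- plain toReal facts
  have hAR : ∀ (i : Fin d) (x : Fin m), (μ {ω | X i ω = x}).toReal = (m : ℝ)⁻¹ := by
    intro i x; rw [hμA, ENNReal.toReal_inv, ENNReal.toReal_natCast]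
  have hPR : ∀ x₁ x₂ : Fin m, (μ ({ω | X k₀ ω = x₁} ∩ {ω | X k₁ ω = x₂})).toReal
      = (m : ℝ)⁻¹ * (m : ℝ)⁻¹ := by
    intro x₁ x₂
    rw [hμP, ENNReal.toReal_mul, ENNReal.toReal_inv, ENNReal.toReal_natCast]
  have hTR : ∀ (x₁ x₂ : Fin m) (y : ℕ),
      (μ ({ω | X k₀ ω = x₁} ∩ {ω | X k₁ ω = x₂} ∩ {ω | Y ω = y})).toReal
        = if y = (if x₁ = x₂ then 1 else 0) then (m : ℝ)⁻¹ * (m : ℝ)⁻¹ else 0 := by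
    intro x₁ x₂ y
    rw [hμT]
    by_cases h : y = (if x₁ = x₂ then 1 else 0)
    · rw [if_pos h, if_pos h, ENNReal.toReal_mul, ENNReal.toReal_inv, ENNReal.toReal_natCast]
    · rw [if_neg h, if_neg h, ENNReal.toReal_zero]
  have hYR : ∀ y : ℕ, y = 0 ∨ y = 1 →
      (μ {ω | Y ω = y}).toReal = if y = 1 then (m : ℝ)⁻¹ else 1 - (m : ℝ)⁻¹ := by
    intro y hy
    rcases hy with hy | hy <;> subst hy
    · rw [if_neg (by norm_num), hμY0, ENNReal.toReal_sub_of_le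
        (ENNReal.inv_le_one.2 (by exact_mod_cast Nat.one_le_iff_ne_zero.2 (by omega)))
        ENNReal.one_ne_top, ENNReal.toReal_one, ENNReal.toReal_inv, ENNReal.toReal_natCast]
    · rw [if_pos rfl, hμY1, ENNReal.toReal_inv, ENNReal.toReal_natCast]
  -- log-argument simplifications
  have hinv1 : (1:ℝ) - (m : ℝ)⁻¹ = ((m:ℝ) - 1) / m := by field_simp
  have e1 : (m:ℝ)⁻¹ / ((m:ℝ)⁻¹ * (m:ℝ)⁻¹) = (m:ℝ) := by field_simp
  have e2 : (m:ℝ)⁻¹ / ((m:ℝ)⁻¹ * (1 - (m:ℝ)⁻¹)) = (m:ℝ) / ((m:ℝ) - 1) := by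
    rw [hinv1]; field_simp
  have e3 : (m:ℝ)⁻¹ * (m:ℝ)⁻¹ / ((m:ℝ)⁻¹ * (m:ℝ)⁻¹ * (m:ℝ)⁻¹) = (m:ℝ) := by field_simp
  have e4 : (m:ℝ)⁻¹ * (m:ℝ)⁻¹ / ((m:ℝ)⁻¹ * (m:ℝ)⁻¹ * (1 - (m:ℝ)⁻¹))
      = (m:ℝ) / ((m:ℝ) - 1) := by rw [hinv1]; field_simp
  -- inner y-sums
  have hin1 : ∀ x₀ x₁ : Fin m,
      (∑ y ∈ ({0, 1} : Finset ℕ),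
          (μ[{ω | X k₁ ω = x₁} ∩ {ω | Y ω = y} | {ω | X k₀ ω = x₀}]).toReal *
            Real.log
              ((μ[{ω | X k₁ ω = x₁} ∩ {ω | Y ω = y} | {ω | X k₀ ω = x₀}]).toReal /
                ((μ[{ω | X k₁ ω = x₁} | {ω | X k₀ ω = x₀}]).toReal *
                  (μ[{ω | Y ω = y} | {ω | X k₀ ω = x₀}]).toReal)))
        = if x₁ = x₀ then (m:ℝ)⁻¹ * Real.log ((m:ℝ)⁻¹ / ((m:ℝ)⁻¹ * (m:ℝ)⁻¹))
          else (m:ℝ)⁻¹ * Real.log ((m:ℝ)⁻¹ / ((m:ℝ)⁻¹ * (1 - (m:ℝ)⁻¹))) := by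
    intro x₀ x₁
    rw [Finset.sum_pair (by norm_num : (0:ℕ) ≠ 1), hc_joint0 x₀ x₁ 0, hc_joint0 x₀ x₁ 1,
      hc_pair0 x₀ x₁, hcY0 x₀ 0 (Or.inl rfl), hcY0 x₀ 1 (Or.inr rfl)]
    by_cases h : x₁ = x₀
    · simp only [if_pos h]; norm_num
    · simp only [if_neg h]; norm_num
  have hin2 : ∀ x₂ x₁ : Fin m,
      (∑ y ∈ ({0, 1} : Finset ℕ),
          (μ[{ω | X k₀ ω = x₁} ∩ {ω | Y ω = y} | {ω | X k₁ ω = x₂}]).toReal *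
            Real.log
              ((μ[{ω | X k₀ ω = x₁} ∩ {ω | Y ω = y} | {ω | X k₁ ω = x₂}]).toReal /
                ((μ[{ω | X k₀ ω = x₁} | {ω | X k₁ ω = x₂}]).toReal *
                  (μ[{ω | Y ω = y} | {ω | X k₁ ω = x₂}]).toReal)))
        = if x₁ = x₂ then (m:ℝ)⁻¹ * Real.log ((m:ℝ)⁻¹ / ((m:ℝ)⁻¹ * (m:ℝ)⁻¹))
          else (m:ℝ)⁻¹ * Real.log ((m:ℝ)⁻¹ / ((m:ℝ)⁻¹ * (1 - (m:ℝ)⁻¹))) := by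
    intro x₂ x₁
    rw [Finset.sum_pair (by norm_num : (0:ℕ) ≠ 1), hc_joint1 x₂ x₁ 0, hc_joint1 x₂ x₁ 1,
      hc_pair1 x₂ x₁, hcY1 x₂ 0 (Or.inl rfl), hcY1 x₂ 1 (Or.inr rfl)]
    by_cases h : x₁ = x₂
    · simp only [if_pos h]; norm_num
    · simp only [if_neg h]; norm_num
  have hin3 : ∀ x₁ x₂ : Fin m,
      (∑ y ∈ ({0, 1} : Finset ℕ),
          (μ ({ω | X k₀ ω = x₁} ∩ {ω | X k₁ ω = x₂} ∩ {ω | Y ω = y})).toReal *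
            Real.log
              ((μ ({ω | X k₀ ω = x₁} ∩ {ω | X k₁ ω = x₂} ∩ {ω | Y ω = y})).toReal /
                ((μ ({ω | X k₀ ω = x₁} ∩ {ω | X k₁ ω = x₂})).toReal *
                  (μ {ω | Y ω = y}).toReal)))
        = if x₂ = x₁
          then (m:ℝ)⁻¹ * (m:ℝ)⁻¹ *
            Real.log ((m:ℝ)⁻¹ * (m:ℝ)⁻¹ / ((m:ℝ)⁻¹ * (m:ℝ)⁻¹ * (m:ℝ)⁻¹))
          else (m:ℝ)⁻¹ * (m:ℝ)⁻¹ *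
            Real.log ((m:ℝ)⁻¹ * (m:ℝ)⁻¹ / ((m:ℝ)⁻¹ * (m:ℝ)⁻¹ * (1 - (m:ℝ)⁻¹))) := by
    intro x₁ x₂
    rw [Finset.sum_pair (by norm_num : (0:ℕ) ≠ 1), hTR x₁ x₂ 0, hTR x₁ x₂ 1, hPR x₁ x₂,
      hYR 0 (Or.inl rfl), hYR 1 (Or.inr rfl)]
    by_cases h : x₁ = x₂
    · simp only [if_pos h, if_pos h.symm]; norm_num
    · simp only [if_neg h, if_neg (fun hc : x₂ = x₁ => h hc.symm)]; norm_num
  -- the three sums all equal C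
  have key1 :
      (∑ x₀ : Fin m, (μ {ω | X k₀ ω = x₀}).toReal *
        ∑ x₁ : Fin m, ∑ y ∈ ({0, 1} : Finset ℕ),
          (μ[{ω | X k₁ ω = x₁} ∩ {ω | Y ω = y} | {ω | X k₀ ω = x₀}]).toReal *
            Real.log
              ((μ[{ω | X k₁ ω = x₁} ∩ {ω | Y ω = y} | {ω | X k₀ ω = x₀}]).toReal /
                ((μ[{ω | X k₁ ω = x₁} | {ω | X k₀ ω = x₀}]).toReal *
                  (μ[{ω | Y ω = y} | {ω | X k₀ ω = x₀}]).toReal)))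
      = ((m : ℝ) - 1) / m * Real.log ((m : ℝ) / ((m : ℝ) - 1)) + 1 / m * Real.log m := by
    simp only [hin1, hAR, stmt9_sum_ite, Fintype.card_fin, Finset.sum_const,
      Finset.card_univ, nsmul_eq_mul]
    rw [e1, e2]
    field_simp
    ring
  have key2 :
      (∑ x₂ : Fin m, (μ {ω | X k₁ ω = x₂}).toReal *
        ∑ x₁ : Fin m, ∑ y ∈ ({0, 1} : Finset ℕ),
          (μ[{ω | X k₀ ω = x₁} ∩ {ω | Y ω = y} | {ω | X k₁ ω = x₂}]).toReal *
            Real.log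
              ((μ[{ω | X k₀ ω = x₁} ∩ {ω | Y ω = y} | {ω | X k₁ ω = x₂}]).toReal /
                ((μ[{ω | X k₀ ω = x₁} | {ω | X k₁ ω = x₂}]).toReal *
                  (μ[{ω | Y ω = y} | {ω | X k₁ ω = x₂}]).toReal)))
      = ((m : ℝ) - 1) / m * Real.log ((m : ℝ) / ((m : ℝ) - 1)) + 1 / m * Real.log m := by
    simp only [hin2, hAR, stmt9_sum_ite, Fintype.card_fin, Finset.sum_const,
      Finset.card_univ, nsmul_eq_mul]
    rw [e1, e2]
    field_simp
    ring
  have key3 :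
      (∑ x₁ : Fin m, ∑ x₂ : Fin m, ∑ y ∈ ({0, 1} : Finset ℕ),
        (μ ({ω | X k₀ ω = x₁} ∩ {ω | X k₁ ω = x₂} ∩ {ω | Y ω = y})).toReal *
          Real.log
            ((μ ({ω | X k₀ ω = x₁} ∩ {ω | X k₁ ω = x₂} ∩ {ω | Y ω = y})).toReal /
              ((μ ({ω | X k₀ ω = x₁} ∩ {ω | X k₁ ω = x₂})).toReal *
                (μ {ω | Y ω = y}).toReal)))
      = ((m : ℝ) - 1) / m * Real.log ((m : ℝ) / ((m : ℝ) - 1)) + 1 / m * Real.log m := by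
    simp only [hin3, stmt9_sum_ite, Fintype.card_fin, Finset.sum_const,
      Finset.card_univ, nsmul_eq_mul]
    rw [e3, e4]
    field_simp
    ring
  exact ⟨key1.trans key2.symm, key2.trans key3.symm, key3⟩
end
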